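/- Let E and F be orthogonal projections on a Hilbert space with E + F = 1, let S be a bounded self-adjoint operator, and let W be a bounded self-adjoint operator with W ≥ 1. Then for every η > 0, in the sense of quadratic forms: E S F + F S E ≥ −η · E S W⁻¹ S E − η⁻¹ · F W F. -/

import Mathlib

open ContinuousLinearMap

/-- Cross-term estimate: if `E`, `F` are orthogonal projections with `E + F = 1`,
`S` is bounded self-adjoint and `W` is bounded self-adjoint with `W ≥ 1`, then for all
`η > 0`, in the sense of quadratic forms,
`E S F + F S E ≥ −η E S W⁻¹ S E − η⁻¹ F W F`. -/
theorem cross_term_projection_bound {H : Type*}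
    [NormedAddCommGroup H] [InnerProductSpace ℂ H] [CompleteSpace H]
    (E F S W : H →L[ℂ] H)
    (hE : IsSelfAdjoint E) (hE' : IsIdempotentElem E)
    (hF : IsSelfAdjoint F) (hF' : IsIdempotentElem F)
    (hEF : E + F = 1)
    (hS : IsSelfAdjoint S) (hW : IsSelfAdjoint W)
    (hW1 : ∀ u : H, ‖u‖ ^ 2 ≤ (inner ℂ u (W u) : ℂ).re)
    (η : ℝ) (hη : 0 < η) :
    ∀ u : H,
      -(η * (inner ℂ u ((E ∘L S ∘L Ring.inverse W ∘L S ∘L E) u) : ℂ).re) -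
          η⁻¹ * (inner ℂ u ((F ∘L W ∘L F) u) : ℂ).re ≤
        (inner ℂ u ((E ∘L S ∘L F + F ∘L S ∘L E) u) : ℂ).re := by
  -- W is bounded below
  have hlow : ∀ v : H, ‖v‖ ≤ ‖W v‖ := by
    intro v
    rcases eq_or_ne v 0 with rfl | hv
    · simp
    · have h1 := hW1 v
      have h2 : (inner ℂ v (W v) : ℂ).re ≤ ‖v‖ * ‖W v‖ := by
        calc (inner ℂ v (W v) : ℂ).re ≤ ‖(inner ℂ v (W v) : ℂ)‖ := Complex.re_le_norm _
        _ ≤ ‖v‖ * ‖W v‖ := norm_inner_le_norm _ _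
      have h3 : ‖v‖ * ‖v‖ ≤ ‖v‖ * ‖W v‖ := by nlinarith [h1, h2]
      exact le_of_mul_le_mul_left h3 (norm_pos_iff.2 hv)
  have hanti : AntilipschitzWith 1 W := W.antilipschitz_of_bound (by simpa using hlow)
  -- W is injective
  have hker : LinearMap.ker (W : H →ₗ[ℂ] H) = ⊥ := by
    rw [LinearMap.ker_eq_bot]
    exact hanti.injective
  -- W has closed range
  have hclosed : IsClosed ((LinearMap.range (W : H →ₗ[ℂ] H) : Submodule ℂ H) : Set H) := by
    have := hanti.isClosed_range W.uniformContinuous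
    simpa [LinearMap.coe_range] using this
  haveI : CompleteSpace (LinearMap.range (W : H →ₗ[ℂ] H) : Submodule ℂ H) := hclosed.completeSpace_coe
  -- W has dense, hence full, range
  have hrange : LinearMap.range (W : H →ₗ[ℂ] H) = ⊤ := by
    rw [← Submodule.orthogonal_eq_bot_iff]
    rw [Submodule.eq_bot_iff]
    intro v hv
    have h0 : (inner ℂ (W v) v : ℂ) = 0 :=
      (Submodule.mem_orthogonal _ _).1 hv (W v) ⟨v, rfl⟩
    have h1 : (inner ℂ v (W v) : ℂ) = 0 := by
      rw [← inner_conj_symm, h0, map_zero]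
    have := hW1 v
    rw [h1] at this
    simp only [Complex.zero_re] at this
    have : ‖v‖ = 0 := by nlinarith [norm_nonneg v]
    simpa [norm_eq_zero] using this
  have e := ContinuousLinearEquiv.ofBijective W hker hrange
  have hecoe : (⇑(ContinuousLinearEquiv.ofBijective W hker hrange) : H → H) = ⇑W :=
    ContinuousLinearEquiv.coeFn_ofBijective W hker hrange
  set e := ContinuousLinearEquiv.ofBijective W hker hrange with he
  have hunit : IsUnit W := by
    refine ⟨⟨W, (e.symm : H →L[ℂ] H), ?_, ?_⟩, rfl⟩
    · ext x
      simp only [ContinuousLinearMap.mul_apply, ContinuousLinearMap.one_apply,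
        ContinuousLinearEquiv.coe_coe]
      rw [← hecoe]
      exact e.apply_symm_apply x
    · ext x
      simp only [ContinuousLinearMap.mul_apply, ContinuousLinearMap.one_apply,
        ContinuousLinearEquiv.coe_coe]
      rw [← hecoe]
      exact e.symm_apply_apply x
  set V := Ring.inverse W with hV
  have hWV : ∀ x : H, W (V x) = x := by
    intro x
    have h := Ring.mul_inverse_cancel W hunit
    calc W (V x) = (W * V) x := rfl
    _ = (1 : H →L[ℂ] H) x := by rw [h]
    _ = x := rfl
  -- main computation
  intro u
  set a := S (E u) with ha
  set b := F u with hb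
  set x := V a with hx
  -- rewrite the three quadratic forms
  have hsym : ∀ (A : H →L[ℂ] H), IsSelfAdjoint A → ∀ p q : H,
      (inner ℂ (A p) q : ℂ) = inner ℂ p (A q) := fun A hA p q => hA.isSymmetric p q
  have t1 : (inner ℂ u ((E ∘L S ∘L V ∘L S ∘L E) u) : ℂ) = inner ℂ a x := by
    have : (E ∘L S ∘L V ∘L S ∘L E) u = E (S x) := rfl
    rw [this, ← hsym E hE, ← hsym S hS]
  have t2 : (inner ℂ u ((F ∘L W ∘L F) u) : ℂ) = inner ℂ b (W b) := by
    have : (F ∘L W ∘L F) u = F (W b) := rfl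
    rw [this, ← hsym F hF]
  have t3 : (inner ℂ u ((E ∘L S ∘L F + F ∘L S ∘L E) u) : ℂ).re
      = (inner ℂ a b : ℂ).re + (inner ℂ b a : ℂ).re := by
    have h1 : (E ∘L S ∘L F + F ∘L S ∘L E) u = E (S b) + F (S (E u)) := rfl
    rw [h1, inner_add_right]
    have h2 : (inner ℂ u (E (S b)) : ℂ) = inner ℂ a b := by
      rw [← hsym E hE, ← hsym S hS]
    have h3 : (inner ℂ u (F (S (E u))) : ℂ) = inner ℂ b a := by
      rw [← hsym F hF]
    rw [h2, h3, Complex.add_re]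
  -- the positivity input
  set c := (η : ℂ) • x + b with hc
  have hcpos : 0 ≤ (inner ℂ c (W c) : ℂ).re := le_trans (by positivity) (hW1 c)
  have hWc : W c = (η : ℂ) • a + W b := by
    rw [hc, map_add, map_smul, hWV]
  have rsymm : ∀ p q : H, (inner ℂ p q : ℂ).re = (inner ℂ q p : ℂ).re := by
    intro p q
    rw [← inner_conj_symm, Complex.conj_re]
  have hxWb : (inner ℂ x (W b) : ℂ).re = (inner ℂ a b : ℂ).re := by
    rw [← hsym W hW, hWV]
  have hxa : (inner ℂ x a : ℂ).re = (inner ℂ a x : ℂ).re := rsymm x a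
  have hba : (inner ℂ b a : ℂ).re = (inner ℂ a b : ℂ).re := rsymm b a
  have hexp : (inner ℂ c (W c) : ℂ).re
      = η * η * (inner ℂ a x : ℂ).re + 2 * (η * (inner ℂ a b : ℂ).re)
        + (inner ℂ b (W b) : ℂ).re := by
    rw [hWc, hc]
    simp only [inner_add_left, inner_add_right, inner_smul_left, inner_smul_right,
      Complex.conj_ofReal, Complex.add_re, Complex.mul_re, Complex.ofReal_re,
      Complex.ofReal_im, zero_mul, sub_zero]
    rw [hxWb, hxa, hba]
    ring
  rw [t1, t2, t3, hba]
  set rax := (inner ℂ a x : ℂ).re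
  set rab := (inner ℂ a b : ℂ).re
  set rbb := (inner ℂ b (W b) : ℂ).re
  have key : 0 ≤ η * η * rax + 2 * (η * rab) + rbb := by rw [← hexp]; exact hcpos
  have h3 : 0 ≤ η⁻¹ * (η * η * rax + 2 * (η * rab) + rbb) :=
    mul_nonneg (inv_nonneg.2 hη.le) key
  have h4 : η⁻¹ * (η * η * rax + 2 * (η * rab) + rbb)
      = η * rax + 2 * rab + η⁻¹ * rbb := by
    field_simp
  linarith [h3, h4.symm ▸ h3]
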